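/- Fix an integer n ≥ 2 and w̄ > 0, and let g ∈ 𝒢ₙ. Then every real eigenvalue of g is at least −w̄√(⌊n/2⌋⌈n/2⌉); moreover, if −w̄√(⌊n/2⌋⌈n/2⌉) is an eigenvalue of g, then there exists a subset S ⊆ {1,…,n} with |S| = ⌊n/2⌋ such that for all i ≠ j, g_{ij} = w̄ if exactly one of i, j lies in S, and g_{ij} = 0 otherwise; i.e., g is isomorphic to the complete balanced bipartite network w̄K_{⌊n/2⌋,⌈n/2⌉}. -/

import Mathlib

open Matrix

/-- `μ` is a (real) eigenvalue of the matrix `M`. -/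
def hasEigen {n : ℕ} (M : Matrix (Fin n) (Fin n) ℝ) (μ : ℝ) : Prop :=
  ∃ v : Fin n → ℝ, v ≠ 0 ∧ M.mulVec v = μ • v

/-- The set `𝒢ₙ` of symmetric `n×n` networks with zero diagonal and weights in `[0, w̄]`. -/
def Gset (n : ℕ) (w : ℝ) : Set (Matrix (Fin n) (Fin n) ℝ) :=
  {g | g.IsSymm ∧ (∀ i, g i i = 0) ∧ ∀ i j, 0 ≤ g i j ∧ g i j ≤ w}

/-- `k·l ≤ ⌊n/2⌋·⌈n/2⌉` whenever `k + l = n`. -/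
lemma balanced_prod_max (n k l : ℕ) (h : k + l = n) :
    k * l ≤ n / 2 * ((n + 1) / 2) := by
  have h1 : (k : ℤ) * l ≤ ((n / 2 : ℕ) : ℤ) * (((n + 1) / 2 : ℕ) : ℤ) := by
    have hp : ((n / 2 : ℕ) : ℤ) + (((n + 1) / 2 : ℕ) : ℤ) = (n : ℤ) := by omega
    have hk : (k : ℤ) + l = n := by exact_mod_cast h
    have hq : ((n / 2 : ℕ) : ℤ) ≤ (((n + 1) / 2 : ℕ) : ℤ) := by omega
    have hq2 : (((n + 1) / 2 : ℕ) : ℤ) ≤ ((n / 2 : ℕ) : ℤ) + 1 := by omega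
    rcases le_or_gt (k : ℤ) ((n / 2 : ℕ) : ℤ) with hc | hc
    · have h3 : (0 : ℤ) ≤ (((n / 2 : ℕ) : ℤ) - k) * ((((n + 1) / 2 : ℕ) : ℤ) - k) :=
        mul_nonneg (by linarith) (by linarith)
      have h4 : (k : ℤ) * l = k * (((n / 2 : ℕ) : ℤ) + (((n + 1) / 2 : ℕ) : ℤ)) - k ^ 2 := by
        linear_combination (k : ℤ) * hk - (k : ℤ) * hp
      linarith [h3, h4]
    · have hc2 : (((n + 1) / 2 : ℕ) : ℤ) ≤ k := by omega
      have h3 : (0 : ℤ) ≤ ((k : ℤ) - ((n / 2 : ℕ) : ℤ)) * ((k : ℤ) - (((n + 1) / 2 : ℕ) : ℤ)) :=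
        mul_nonneg (by linarith) (by linarith)
      have h4 : (k : ℤ) * l = k * (((n / 2 : ℕ) : ℤ) + (((n + 1) / 2 : ℕ) : ℤ)) - k ^ 2 := by
        linear_combination (k : ℤ) * hk - (k : ℤ) * hp
      linarith [h3, h4]
  exact_mod_cast h1

set_option maxHeartbeats 1600000 in
open Finset in
lemma stmt11_aux (n : ℕ) (hn : 2 ≤ n) (w : ℝ) (hw : 0 < w)
    (g : Matrix (Fin n) (Fin n) ℝ) (hsym : g.IsSymm) (hdiag : ∀ i, g i i = 0)
    (hbnd : ∀ i j, 0 ≤ g i j ∧ g i j ≤ w)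
    (μ : ℝ) (v : Fin n → ℝ) (hv : v ≠ 0) (heig : g.mulVec v = μ • v) :
    -(w * Real.sqrt (((n / 2 : ℕ) : ℝ) * (((n + 1) / 2 : ℕ) : ℝ))) ≤ μ ∧
    (μ = -(w * Real.sqrt (((n / 2 : ℕ) : ℝ) * (((n + 1) / 2 : ℕ) : ℝ))) →
      ∃ S : Finset (Fin n), S.card = n / 2 ∧
        ∀ i j : Fin n, i ≠ j → g i j = if (i ∈ S ↔ j ∈ S) then 0 else w) := by
  classical
  set pr : ℝ := ((n / 2 : ℕ) : ℝ) with hpr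
  set qr : ℝ := (((n + 1) / 2 : ℕ) : ℝ) with hqr
  have hp1 : 1 ≤ n / 2 := by omega
  have hq1 : 1 ≤ (n + 1) / 2 := by omega
  have hprpos : 0 < pr := by rw [hpr]; exact_mod_cast hp1
  have hqrpos : 0 < qr := by rw [hqr]; exact_mod_cast hq1
  have hpq0 : (0 : ℝ) ≤ pr * qr := by positivity
  set P : Finset (Fin n) := Finset.univ.filter (fun i => 0 ≤ v i) with hPdef
  set N : Finset (Fin n) := Finset.univ.filter (fun i => ¬ 0 ≤ v i) with hNdef
  have hmemP : ∀ i, i ∈ P ↔ 0 ≤ v i := by intro i; simp [hPdef]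
  have hmemN : ∀ i, i ∈ N ↔ v i < 0 := by intro i; simp [hNdef]
  have hvP : ∀ i ∈ P, 0 ≤ v i := fun i hi => (hmemP i).mp hi
  have hvN : ∀ i ∈ N, v i < 0 := fun i hi => (hmemN i).mp hi
  set s : ℝ := ∑ i, v i ^ 2 with hsdef
  have hs : 0 < s := by
    obtain ⟨i, hi⟩ := Function.ne_iff.mp hv
    exact Finset.sum_pos' (fun j _ => sq_nonneg _)
      ⟨i, Finset.mem_univ i, lt_of_le_of_ne (sq_nonneg _) (Ne.symm (pow_ne_zero 2 hi))⟩
  set a : ℝ := ∑ i ∈ P, v i with hadef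
  set b : ℝ := ∑ i ∈ N, v i with hbdef
  set α2 : ℝ := ∑ i ∈ P, v i ^ 2 with hα2def
  set β2 : ℝ := ∑ i ∈ N, v i ^ 2 with hβ2def
  have hsplit : ∀ F : Fin n → ℝ, ∑ i, F i = (∑ i ∈ P, F i) + (∑ i ∈ N, F i) := fun F =>
    (Finset.sum_filter_add_sum_filter_not Finset.univ (fun i => 0 ≤ v i) F).symm
  have hs2 : s = α2 + β2 := hsplit _
  have ha0 : 0 ≤ a := Finset.sum_nonneg hvP
  have hb0 : b ≤ 0 := Finset.sum_nonpos (fun i hi => (hvN i hi).le)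
  -- the quadratic form
  have hQ : μ * s = ∑ i, ∑ j, g i j * (v j * v i) := by
    have h1 : ∀ i, μ * v i = ∑ j, g i j * v j := by
      intro i
      have := congrFun heig i
      simpa [Matrix.mulVec, dotProduct] using this.symm
    calc μ * s = ∑ i, (μ * v i) * v i := by
          rw [hsdef, Finset.mul_sum]; exact Finset.sum_congr rfl fun i _ => by ring
      _ = ∑ i, (∑ j, g i j * v j) * v i := by
          exact Finset.sum_congr rfl fun i _ => by rw [h1 i]
      _ = ∑ i, ∑ j, g i j * (v j * v i) := by
          exact Finset.sum_congr rfl fun i _ => by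
            rw [Finset.sum_mul]; exact Finset.sum_congr rfl fun j _ => by ring
  set PP : ℝ := ∑ i ∈ P, ∑ j ∈ P, g i j * (v j * v i) with hPPdef
  set PN : ℝ := ∑ i ∈ P, ∑ j ∈ N, g i j * (v j * v i) with hPNdef
  set NP : ℝ := ∑ i ∈ N, ∑ j ∈ P, g i j * (v j * v i) with hNPdef
  set NN : ℝ := ∑ i ∈ N, ∑ j ∈ N, g i j * (v j * v i) with hNNdef
  have hQsplit : μ * s = PP + PN + (NP + NN) := by
    rw [hQ, hsplit (fun i => ∑ j, g i j * (v j * v i))]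
    rw [Finset.sum_congr rfl (fun i _ => hsplit (fun j => g i j * (v j * v i))),
      Finset.sum_add_distrib]
    rw [Finset.sum_congr rfl (fun i (_ : i ∈ N) => hsplit (fun j => g i j * (v j * v i))),
      Finset.sum_add_distrib]
  -- generic double-sum identity
  have hsum2 : ∀ (A B : Finset (Fin n)) (c : ℝ),
      ∑ i ∈ A, ∑ j ∈ B, c * (v j * v i) = c * ((∑ j ∈ B, v j) * (∑ i ∈ A, v i)) := by
    intro A B c
    calc ∑ i ∈ A, ∑ j ∈ B, c * (v j * v i) = ∑ i ∈ A, (∑ j ∈ B, v j) * (c * v i) := by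
          refine Finset.sum_congr rfl fun i _ => ?_
          rw [Finset.sum_mul]; exact Finset.sum_congr rfl fun j _ => by ring
      _ = (∑ j ∈ B, v j) * (c * ∑ i ∈ A, v i) := by rw [← Finset.mul_sum, ← Finset.mul_sum]
      _ = c * ((∑ j ∈ B, v j) * (∑ i ∈ A, v i)) := by ring
  -- lower bounds on the four blocks
  have iPP : 0 ≤ PP := by
    refine Finset.sum_nonneg fun i hi => Finset.sum_nonneg fun j hj => ?_
    exact mul_nonneg (hbnd i j).1 (mul_nonneg (hvP j hj) (hvP i hi))
  have iNN : 0 ≤ NN := by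
    refine Finset.sum_nonneg fun i hi => Finset.sum_nonneg fun j hj => ?_
    exact mul_nonneg (hbnd i j).1 (mul_pos_of_neg_of_neg (hvN j hj) (hvN i hi)).le
  have hPNterm : ∀ i ∈ P, ∀ j ∈ N, w * (v j * v i) ≤ g i j * (v j * v i) := by
    intro i hi j hj
    have hvv : v j * v i ≤ 0 := mul_nonpos_of_nonpos_of_nonneg (hvN j hj).le (hvP i hi)
    exact mul_le_mul_of_nonpos_right (hbnd i j).2 hvv
  have hNPterm : ∀ i ∈ N, ∀ j ∈ P, w * (v j * v i) ≤ g i j * (v j * v i) := by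
    intro i hi j hj
    have hvv : v j * v i ≤ 0 := mul_nonpos_of_nonneg_of_nonpos (hvP j hj) (hvN i hi).le
    exact mul_le_mul_of_nonpos_right (hbnd i j).2 hvv
  have iPN : w * (b * a) ≤ PN := by
    have := Finset.sum_le_sum (fun i (hi : i ∈ P) =>
      Finset.sum_le_sum (fun j (hj : j ∈ N) => hPNterm i hi j hj))
    calc w * (b * a) = ∑ i ∈ P, ∑ j ∈ N, w * (v j * v i) := (hsum2 P N w).symm
      _ ≤ PN := this
  have iNP : w * (a * b) ≤ NP := by
    have := Finset.sum_le_sum (fun i (hi : i ∈ N) =>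
      Finset.sum_le_sum (fun j (hj : j ∈ P) => hNPterm i hi j hj))
    calc w * (a * b) = ∑ i ∈ N, ∑ j ∈ P, w * (v j * v i) := (hsum2 N P w).symm
      _ ≤ NP := this
  -- Cauchy–Schwarz and the counting bound
  have ha2 : a ^ 2 ≤ (P.card : ℝ) * α2 := by
    simpa using sq_sum_le_card_mul_sum_sq (s := P) (f := v)
  have hb2 : b ^ 2 ≤ (N.card : ℝ) * β2 := by
    simpa using sq_sum_le_card_mul_sum_sq (s := N) (f := v)
  have hα2nn : 0 ≤ α2 := Finset.sum_nonneg fun i _ => sq_nonneg _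
  have hβ2nn : 0 ≤ β2 := Finset.sum_nonneg fun i _ => sq_nonneg _
  have hcardPN : P.card + N.card = n := by
    have := Finset.card_filter_add_card_filter_not (s := (Finset.univ : Finset (Fin n)))
      (p := fun i => 0 ≤ v i)
    simpa [hPdef, hNdef] using this
  have hcap : (P.card : ℝ) * (N.card : ℝ) ≤ pr * qr := by
    rw [hpr, hqr]
    exact_mod_cast balanced_prod_max n P.card N.card hcardPN
  have e1 : a ^ 2 * b ^ 2 ≤ ((P.card : ℝ) * α2) * ((N.card : ℝ) * β2) :=
    mul_le_mul ha2 hb2 (sq_nonneg b) (by positivity)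
  have e2 : 4 * (α2 * β2) ≤ s ^ 2 := by
    rw [hs2]; linarith [sq_nonneg (α2 - β2)]
  have e4 : ((P.card : ℝ) * N.card) * (4 * (α2 * β2)) ≤ ((P.card : ℝ) * N.card) * s ^ 2 :=
    mul_le_mul_of_nonneg_left e2 (by positivity)
  have e5 : (2 * (a * (-b))) ^ 2 ≤ (pr * qr) * s ^ 2 := by
    linarith [e1, e4, mul_le_mul_of_nonneg_right hcap (sq_nonneg s)]
  have key : 2 * (a * (-b)) ≤ Real.sqrt (pr * qr) * s := by
    have h2ab : 0 ≤ 2 * (a * (-b)) := by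
      have := mul_nonneg ha0 (neg_nonneg.mpr hb0); linarith
    have h1 : 2 * (a * (-b)) = Real.sqrt ((2 * (a * (-b))) ^ 2) := (Real.sqrt_sq h2ab).symm
    rw [h1]
    calc Real.sqrt ((2 * (a * (-b))) ^ 2) ≤ Real.sqrt ((pr * qr) * s ^ 2) :=
          Real.sqrt_le_sqrt e5
      _ = Real.sqrt (pr * qr) * Real.sqrt (s ^ 2) := Real.sqrt_mul hpq0 _
      _ = Real.sqrt (pr * qr) * s := by rw [Real.sqrt_sq hs.le]
  have keyw : w * (2 * (a * (-b))) ≤ w * (Real.sqrt (pr * qr) * s) :=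
    mul_le_mul_of_nonneg_left key hw.le
  -- part 1
  have part1 : -(w * Real.sqrt (pr * qr)) ≤ μ := by
    have h1 : -(w * Real.sqrt (pr * qr)) * s ≤ μ * s := by
      linarith [hQsplit, iPP, iNN, iPN, iNP, keyw]
    exact le_of_mul_le_mul_right h1 hs
  refine ⟨part1, ?_⟩
  -- part 2: equality case
  intro hμ
  have slack5 : 0 ≤ 2 * (w * (a * b)) + w * (Real.sqrt (pr * qr) * s) := by linarith [keyw]
  have hQ2 : -(w * Real.sqrt (pr * qr)) * s = PP + PN + (NP + NN) := by
    rw [← hμ]; exact hQsplit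
  have eqPP : PP = 0 := by linarith [hQ2, iPP, iNN, iPN, iNP, slack5]
  have eqNN : NN = 0 := by linarith [hQ2, iPP, iNN, iPN, iNP, slack5]
  have eqPN : PN = w * (b * a) := by linarith [hQ2, iPP, iNN, iPN, iNP, slack5]
  have eq5 : 2 * (w * (a * b)) + w * (Real.sqrt (pr * qr) * s) = 0 := by
    linarith [hQ2, iPP, iNN, iPN, iNP, slack5]
  have hab : 2 * (a * b) = -(Real.sqrt (pr * qr) * s) := by
    have h1 : w * (2 * (a * b) + Real.sqrt (pr * qr) * s) = 0 := by linear_combination eq5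
    have h2 := (mul_eq_zero.mp h1).resolve_left (ne_of_gt hw)
    linarith
  have hsq : 4 * (a * b) ^ 2 = (pr * qr) * s ^ 2 := by
    have h1 : (2 * (a * b)) ^ 2 = (Real.sqrt (pr * qr)) ^ 2 * s ^ 2 := by rw [hab]; ring
    rw [Real.sq_sqrt hpq0] at h1
    linarith [h1]
  -- all the intermediate inequalities are equalities
  have c1 : (pr * qr) * s ^ 2 ≤ ((P.card : ℝ) * N.card) * s ^ 2 := by linarith [e1, e4, hsq]
  have hPNeq : (P.card : ℝ) * (N.card : ℝ) = pr * qr :=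
    le_antisymm hcap (le_of_mul_le_mul_right c1 (by positivity))
  have h4eq : 4 * (α2 * β2) = s ^ 2 := by
    refine le_antisymm e2 ?_
    have hPNmul : ((P.card : ℝ) * N.card) * (4 * (α2 * β2)) = (pr * qr) * (4 * (α2 * β2)) := by
      rw [hPNeq]
    have h1 : (pr * qr) * s ^ 2 ≤ (pr * qr) * (4 * (α2 * β2)) := by
      linarith [e1, hsq, hPNmul]
    exact le_of_mul_le_mul_left h1 (by positivity)
  have hαβ : α2 = β2 := by
    have h1 : (α2 - β2) ^ 2 = 0 := by
      linear_combination (-(s + α2 + β2)) * hs2 - h4eq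
    have := pow_eq_zero_iff (n := 2) (by norm_num) |>.mp h1
    linarith [this, sub_eq_zero.mp this]
  have hα2pos : 0 < α2 := by linarith [hαβ, hs2, hs]
  have hβ2pos : 0 < β2 := by linarith [hαβ, hs2, hs]
  have hPcpos : 0 < (P.card : ℝ) := by
    by_contra h
    push_neg at h
    have : P = ∅ := Finset.card_eq_zero.mp (by exact_mod_cast le_antisymm (by exact_mod_cast h) (Nat.zero_le _))
    rw [hα2def, this, Finset.sum_empty] at hα2pos
    exact lt_irrefl 0 hα2pos
  have hNcpos : 0 < (N.card : ℝ) := by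
    by_contra h
    push_neg at h
    have : N = ∅ := Finset.card_eq_zero.mp (by exact_mod_cast le_antisymm (by exact_mod_cast h) (Nat.zero_le _))
    rw [hβ2def, this, Finset.sum_empty] at hβ2pos
    exact lt_irrefl 0 hβ2pos
  have hXY : a ^ 2 * b ^ 2 = ((P.card : ℝ) * α2) * ((N.card : ℝ) * β2) := by
    linear_combination (1/4) * hsq - (pr * qr / 4) * h4eq - (α2 * β2) * hPNeq
  have haeq : a ^ 2 = (P.card : ℝ) * α2 := by
    have hY : 0 < (N.card : ℝ) * β2 := by positivity
    have h1 : a ^ 2 * b ^ 2 ≤ a ^ 2 * ((N.card : ℝ) * β2) :=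
      mul_le_mul_of_nonneg_left hb2 (sq_nonneg a)
    have h2 : ((P.card : ℝ) * α2) * ((N.card : ℝ) * β2) ≤ a ^ 2 * ((N.card : ℝ) * β2) := by
      linarith [hXY, h1]
    have h3 : (P.card : ℝ) * α2 ≤ a ^ 2 := le_of_mul_le_mul_right h2 hY
    linarith [ha2]
  -- v is constant (and positive) on P
  have hconstP : ∀ i ∈ P, (P.card : ℝ) * v i = a := by
    have hT : ∑ i ∈ P, ((P.card : ℝ) * v i - a) ^ 2 = 0 := by
      have hexp : ∀ i ∈ P, ((P.card : ℝ) * v i - a) ^ 2 =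
          (P.card : ℝ) ^ 2 * v i ^ 2 - (2 * (P.card : ℝ) * a) * v i + a ^ 2 := fun i _ => by ring
      rw [Finset.sum_congr rfl hexp]
      rw [Finset.sum_add_distrib, Finset.sum_sub_distrib, ← Finset.mul_sum, ← Finset.mul_sum,
        Finset.sum_const, nsmul_eq_mul]
      rw [← hα2def, ← hadef]
      linear_combination (-((P.card : ℝ))) * haeq
    intro i hi
    have := (Finset.sum_eq_zero_iff_of_nonneg (fun i _ => sq_nonneg _)).mp hT i hi
    have h2 := pow_eq_zero_iff (n := 2) (by norm_num) |>.mp this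
    linarith [sub_eq_zero.mp h2]
  have hvPpos : ∀ i ∈ P, 0 < v i := by
    intro i hi
    rcases (hvP i hi).lt_or_eq with h | h
    · exact h
    · exfalso
      have h1 := hconstP i hi
      rw [← h, mul_zero] at h1
      have : a ^ 2 = 0 := by rw [← h1]; ring
      linarith [haeq, mul_pos hPcpos hα2pos, this]
  -- extract the structure of g
  have gPP : ∀ i ∈ P, ∀ j ∈ P, i ≠ j → g i j = 0 := by
    intro i hi j hj _
    have h1 := (Finset.sum_eq_zero_iff_of_nonneg (fun i hi => Finset.sum_nonneg fun j hj =>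
      mul_nonneg (hbnd i j).1 (mul_nonneg (hvP j hj) (hvP i hi)))).mp eqPP i hi
    have h2 := (Finset.sum_eq_zero_iff_of_nonneg (fun j hj =>
      mul_nonneg (hbnd i j).1 (mul_nonneg (hvP j hj) (hvP i hi)))).mp h1 j hj
    have hvv : 0 < v j * v i := mul_pos (hvPpos j hj) (hvPpos i hi)
    exact (mul_eq_zero.mp h2).resolve_right (ne_of_gt hvv)
  have gNN : ∀ i ∈ N, ∀ j ∈ N, i ≠ j → g i j = 0 := by
    intro i hi j hj _
    have tnn : ∀ i ∈ N, ∀ j ∈ N, 0 ≤ g i j * (v j * v i) := fun i hi j hj =>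
      mul_nonneg (hbnd i j).1 (mul_pos_of_neg_of_neg (hvN j hj) (hvN i hi)).le
    have h1 := (Finset.sum_eq_zero_iff_of_nonneg (fun i hi => Finset.sum_nonneg fun j hj =>
      tnn i hi j hj)).mp eqNN i hi
    have h2 := (Finset.sum_eq_zero_iff_of_nonneg (fun j hj => tnn i hi j hj)).mp h1 j hj
    have hvv : 0 < v j * v i := mul_pos_of_neg_of_neg (hvN j hj) (hvN i hi)
    exact (mul_eq_zero.mp h2).resolve_right (ne_of_gt hvv)
  have gPN : ∀ i ∈ P, ∀ j ∈ N, g i j = w := by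
    have hzero : ∑ i ∈ P, ∑ j ∈ N, (g i j * (v j * v i) - w * (v j * v i)) = 0 := by
      rw [Finset.sum_congr rfl fun i (_ : i ∈ P) => Finset.sum_sub_distrib _ _]
      rw [Finset.sum_sub_distrib]
      rw [← hPNdef, hsum2 P N w, ← hbdef, ← hadef, eqPN]
      ring
    intro i hi j hj
    have tnn : ∀ i ∈ P, ∀ j ∈ N, 0 ≤ g i j * (v j * v i) - w * (v j * v i) := fun i hi j hj =>
      sub_nonneg.mpr (hPNterm i hi j hj)
    have h1 := (Finset.sum_eq_zero_iff_of_nonneg (fun i hi => Finset.sum_nonneg fun j hj =>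
      tnn i hi j hj)).mp hzero i hi
    have h2 := (Finset.sum_eq_zero_iff_of_nonneg (fun j hj => tnn i hi j hj)).mp h1 j hj
    have h3 : (g i j - w) * (v j * v i) = 0 := by linear_combination h2
    have hvv : v j * v i < 0 := mul_neg_of_neg_of_pos (hvN j hj) (hvPpos i hi)
    have h4 := (mul_eq_zero.mp h3).resolve_right (ne_of_lt hvv)
    linarith [sub_eq_zero.mp h4]
  have gNP : ∀ i ∈ N, ∀ j ∈ P, g i j = w := by
    intro i hi j hj
    rw [hsym.apply j i]
    exact gPN j hj i hi
  -- the structural conclusion in terms of the sign of v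
  have hsol : ∀ i j : Fin n, i ≠ j → g i j = if ((0 ≤ v i) ↔ (0 ≤ v j)) then 0 else w := by
    intro i j hij
    by_cases hi : 0 ≤ v i <;> by_cases hj : 0 ≤ v j
    · rw [if_pos (by tauto)]
      exact gPP i ((hmemP i).mpr hi) j ((hmemP j).mpr hj) hij
    · rw [if_neg (by tauto)]
      exact gPN i ((hmemP i).mpr hi) j ((hmemN j).mpr (not_le.mp hj))
    · rw [if_neg (by tauto)]
      exact gNP i ((hmemN i).mpr (not_le.mp hi)) j ((hmemP j).mpr hj)
    · rw [if_pos (by tauto)]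
      exact gNN i ((hmemN i).mpr (not_le.mp hi)) j ((hmemN j).mpr (not_le.mp hj)) hij
  -- the sizes of P and N
  have hPNnat : P.card * N.card = (n / 2) * ((n + 1) / 2) := by
    have : ((P.card * N.card : ℕ) : ℝ) = (((n / 2) * ((n + 1) / 2) : ℕ) : ℝ) := by
      push_cast
      rw [hPNeq, hpr, hqr]
    exact_mod_cast this
  have hcards : P.card = n / 2 ∨ N.card = n / 2 := by
    have h1 : (P.card : ℤ) + N.card = n := by exact_mod_cast hcardPN
    have h2 : (P.card : ℤ) * N.card = ((n / 2 : ℕ) : ℤ) * (((n + 1) / 2 : ℕ) : ℤ) := by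
      exact_mod_cast hPNnat
    have hp : ((n / 2 : ℕ) : ℤ) + (((n + 1) / 2 : ℕ) : ℤ) = (n : ℤ) := by omega
    have h3 : ((P.card : ℤ) - ((n / 2 : ℕ) : ℤ)) * ((P.card : ℤ) - (((n + 1) / 2 : ℕ) : ℤ)) = 0 := by
      linear_combination (P.card : ℤ) * h1 - h2 - (P.card : ℤ) * hp
    rcases mul_eq_zero.mp h3 with h | h
    · left; omega
    · right
      have : (P.card : ℤ) = (((n + 1) / 2 : ℕ) : ℤ) := by linarith
      omega
  rcases hcards with hc | hc
  · refine ⟨P, hc, fun i j hij => ?_⟩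
    have : (i ∈ P ↔ j ∈ P) ↔ ((0 ≤ v i) ↔ (0 ≤ v j)) := by
      rw [hmemP i, hmemP j]
    rw [show (if (i ∈ P ↔ j ∈ P) then (0:ℝ) else w) = (if ((0 ≤ v i) ↔ (0 ≤ v j)) then (0:ℝ) else w)
      from if_congr this rfl rfl]
    exact hsol i j hij
  · refine ⟨N, hc, fun i j hij => ?_⟩
    have : (i ∈ N ↔ j ∈ N) ↔ ((0 ≤ v i) ↔ (0 ≤ v j)) := by
      rw [hmemN i, hmemN j]
      constructor
      · intro h
        constructor
        · intro h1; by_contra h2; exact absurd (h.mpr (not_le.mp h2)) (not_lt.mpr h1)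
        · intro h1; by_contra h2; exact absurd (h.mp (not_le.mp h2)) (not_lt.mpr h1)
      · intro h
        constructor
        · intro h1; by_contra h2; exact absurd (h.mpr (not_lt.mp h2)) (not_le.mpr h1)
        · intro h1; by_contra h2; exact absurd (h.mp (not_lt.mp h2)) (not_le.mpr h1)
    rw [show (if (i ∈ N ↔ j ∈ N) then (0:ℝ) else w) = (if ((0 ≤ v i) ↔ (0 ≤ v j)) then (0:ℝ) else w)
      from if_congr this rfl rfl]
    exact hsol i j hij

/-- Lemma 2(ii): every real eigenvalue of `g ∈ 𝒢ₙ` is at least `−w̄√(⌊n/2⌋⌈n/2⌉)`, with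
equality only for networks isomorphic to the complete balanced bipartite network
`w̄ K_{⌊n/2⌋,⌈n/2⌉}`. -/
theorem stmt11 (n : ℕ) (hn : 2 ≤ n) (w : ℝ) (hw : 0 < w)
    (g : Matrix (Fin n) (Fin n) ℝ) (hg : g ∈ Gset n w) :
    (∀ μ : ℝ, hasEigen g μ →
      -(w * Real.sqrt (((n / 2 : ℕ) : ℝ) * (((n + 1) / 2 : ℕ) : ℝ))) ≤ μ) ∧
    (hasEigen g (-(w * Real.sqrt (((n / 2 : ℕ) : ℝ) * (((n + 1) / 2 : ℕ) : ℝ)))) →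
      ∃ S : Finset (Fin n), S.card = n / 2 ∧
        ∀ i j : Fin n, i ≠ j → g i j = if (i ∈ S ↔ j ∈ S) then 0 else w) := by
  obtain ⟨hsym, hdiag, hbnd⟩ := hg
  constructor
  · rintro μ ⟨v, hv, heig⟩
    exact (stmt11_aux n hn w hw g hsym hdiag hbnd μ v hv heig).1
  · rintro ⟨v, hv, heig⟩
    exact (stmt11_aux n hn w hw g hsym hdiag hbnd _ v hv heig).2 rfl
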